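/- Double twist in the 2×n case: the matrix τ→(A) again satisfies det(τ→(A)_i, τ→(A)_{i+1}) ≠ 0 for all i (so its right twist is defined by the same recipe), and the double twist satisfies τ→(τ→(A))_i = −( det(A_i, A_{i+1}) / det(A_{i+1}, A_{i+2}) ) · A_{i+2} for every i ∈ ℤ. -/

import Mathlib

/-- The determinant `det(x, y)` of the `2×2` matrix with columns `x, y`. -/
noncomputable def det2 (x y : Fin 2 → ℂ) : ℂ := x 0 * y 1 - x 1 * y 0

/-- The standard symmetric bilinear form `⟨x|y⟩ = x₁y₁ + x₂y₂` on `ℂ²`. -/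
noncomputable def bil2 (x y : Fin 2 → ℂ) : ℂ := x 0 * y 0 + x 1 * y 1

/-- `T` is the right twist of the `2×n` matrix `A` (with all cyclically
consecutive `2×2` minors nonzero, so that its `i`-minimal column basis is
`{i, i+1}`): the `i`-th column of `T` is the unique `v ∈ ℂ²` with
`⟨v|A i⟩ = 1` and `⟨v|A (i+1)⟩ = 0`. -/
def IsTwist2 (A T : ℤ → Fin 2 → ℂ) : Prop :=
  ∀ i : ℤ, bil2 (T i) (A i) = 1 ∧ bil2 (T i) (A (i + 1)) = 0

lemma twist2_solve (a b v : Fin 2 → ℂ) (hd : det2 a b ≠ 0)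
    (h1 : bil2 v a = 1) (h2 : bil2 v b = 0) :
    v 0 = b 1 / det2 a b ∧ v 1 = -b 0 / det2 a b := by
  unfold det2 bil2 at *
  constructor
  · rw [eq_div_iff hd]
    linear_combination b 1 * h1 - a 1 * h2
  · rw [eq_div_iff hd]
    linear_combination -(b 0) * h1 + a 0 * h2

/-- double twist in the `2×n` case: `τ→(A)` again has all
cyclically consecutive `2×2` minors nonzero (so its right twist is defined by
the same recipe), and the double twist satisfies
`τ→(τ→(A)) i = -(det(A i, A (i+1)) / det(A (i+1), A (i+2))) • A (i+2)`. -/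
theorem twist2_double
    (n : ℕ) (hn : 2 ≤ n)
    (A : ℤ → Fin 2 → ℂ) (hper : ∀ a : ℤ, A (a + (n : ℤ)) = A a)
    (hminor : ∀ i : ℤ, det2 (A i) (A (i + 1)) ≠ 0)
    (T : ℤ → Fin 2 → ℂ) (hT : IsTwist2 A T) :
    (∀ i : ℤ, det2 (T i) (T (i + 1)) ≠ 0) ∧
    ∀ S : ℤ → Fin 2 → ℂ, IsTwist2 T S →
      ∀ i : ℤ,
        S i = (-(det2 (A i) (A (i + 1)) / det2 (A (i + 1)) (A (i + 2)))) •
          A (i + 2) := by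
  have hTval : ∀ i : ℤ, T i 0 = A (i+1) 1 / det2 (A i) (A (i+1)) ∧
      T i 1 = -(A (i+1) 0) / det2 (A i) (A (i+1)) :=
    fun i => twist2_solve _ _ _ (hminor i) (hT i).1 (hT i).2
  have hdetT : ∀ i : ℤ, det2 (T i) (T (i+1)) = (det2 (A i) (A (i+1)))⁻¹ := by
    intro i
    obtain ⟨h0, h1⟩ := hTval i
    obtain ⟨h0', h1'⟩ := hTval (i+1)
    have e : i + 1 + 1 = i + 2 := by ring
    rw [e] at h0' h1'
    have d1 := hminor i
    have d2 := hminor (i+1)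
    rw [e] at d2
    unfold det2 at *
    rw [h0, h1, h0', h1']
    field_simp
    ring
  have hdetTne : ∀ i : ℤ, det2 (T i) (T (i+1)) ≠ 0 := by
    intro i
    rw [hdetT i]
    exact inv_ne_zero (hminor i)
  refine ⟨hdetTne, ?_⟩
  intro S hS i
  obtain ⟨s0, s1⟩ := twist2_solve _ _ _ (hdetTne i) (hS i).1 (hS i).2
  obtain ⟨h0', h1'⟩ := hTval (i+1)
  have e : i + 1 + 1 = i + 2 := by ring
  rw [e] at h0' h1'
  have d1 := hminor i
  have d2 := hminor (i+1)
  rw [e] at d2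
  rw [hdetT i] at s0 s1
  funext k
  fin_cases k
  · show S i 0 = ((-(det2 (A i) (A (i + 1)) / det2 (A (i + 1)) (A (i + 2)))) • A (i + 2)) 0
    rw [s0, h1']
    simp only [Pi.smul_apply, smul_eq_mul]
    unfold det2 at *
    rw [div_inv_eq_mul]
    ring
  · show S i 1 = ((-(det2 (A i) (A (i + 1)) / det2 (A (i + 1)) (A (i + 2)))) • A (i + 2)) 1
    rw [s1, h0']
    simp only [Pi.smul_apply, smul_eq_mul]
    unfold det2 at *
    rw [div_inv_eq_mul]
    ring
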